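/- Let $\{b_1,\ldots,b_n\}$ be an LLL-reduced basis of an integral unimodular lattice $L$, let $\sigma$ be an automorphism of $L$ (an inner-product-preserving group automorphism), and write $\sigma(b_i) = \sum_{j=1}^n a_{ij} b_j$ with $a_{ij} \in {\mathbb Z}$. Then $|a_{ij}| \le 3^{n-1}$ for all $i,j$. -/

import Mathlib

/-- The Gram–Schmidt orthogonalization of a family of vectors in `ℝⁿ`. -/
noncomputable def gso {n : ℕ} (b : Fin n → EuclideanSpace ℝ (Fin n)) :
    Fin n → EuclideanSpace ℝ (Fin n) :=
  @InnerProductSpace.gramSchmidt ℝ _ _ _ _ (Fin n) inferInstance inferInstance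
    (inferInstance : WellFoundedLT (Fin n)) b

section main
variable {n : ℕ} (b : Fin n → EuclideanSpace ℝ (Fin n))

lemma gso_orthogonal {p q : Fin n} (h : p ≠ q) : (inner ℝ (gso b p) (gso b q) : ℝ) = 0 :=
  @InnerProductSpace.gramSchmidt_orthogonal ℝ _ _ _ _ (Fin n) inferInstance inferInstance
    (inferInstance : WellFoundedLT (Fin n)) b p q h

lemma gso_triangular {p k : Fin n} (h : p < k) : (inner ℝ (b p) (gso b k) : ℝ) = 0 := by
  rw [real_inner_comm]
  exact @InnerProductSpace.gramSchmidt_inv_triangular ℝ _ _ _ _ (Fin n) inferInstance inferInstance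
    (inferInstance : WellFoundedLT (Fin n)) b p k h

lemma gso_expand0 (p : Fin n) :
    b p = gso b p + ∑ l ∈ Finset.Iio p,
      ((inner ℝ (gso b l) (b p) : ℝ) / ‖gso b l‖ ^ 2) • gso b l := by
  have h := @InnerProductSpace.gramSchmidt_def'' ℝ _ _ _ _ (Fin n) inferInstance inferInstance
    (inferInstance : WellFoundedLT (Fin n)) b p
  exact_mod_cast h

/-- Gram–Schmidt norm squared. -/
noncomputable def dd (k : Fin n) : ℝ := ‖gso b k‖ ^ 2

/-- Gram–Schmidt coefficients. -/
noncomputable def mu (p k : Fin n) : ℝ :=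
  if k = p then 1 else (inner ℝ (b p) (gso b k) : ℝ) / dd b k

lemma mu_self (p : Fin n) : mu b p p = 1 := if_pos rfl

lemma mu_zero {p k : Fin n} (h : p < k) : mu b p k = 0 := by
  rw [mu, if_neg h.ne', gso_triangular b h, zero_div]

lemma gso_expand (p : Fin n) : b p = ∑ k, mu b p k • gso b k := by
  have h2 : ∑ k ∈ Finset.univ.filter (fun k => ¬ k < p), mu b p k • gso b k = gso b p := by
    rw [Finset.sum_eq_single_of_mem p (by simp)]
    · rw [mu_self, one_smul]
    · intro k hk hne
      have hpk : p < k :=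
        lt_of_le_of_ne (le_of_not_gt (Finset.mem_filter.mp hk).2) (Ne.symm hne)
      rw [mu_zero b hpk, zero_smul]
  have h1 : ∑ k ∈ Finset.univ.filter (fun k => k < p), mu b p k • gso b k
      = ∑ l ∈ Finset.Iio p, ((inner ℝ (gso b l) (b p) : ℝ) / ‖gso b l‖ ^ 2) • gso b l := by
    have hs : Finset.univ.filter (fun k : Fin n => k < p) = Finset.Iio p := by
      ext k; simp
    rw [hs]
    refine Finset.sum_congr rfl fun k hk => ?_
    have hkp : k < p := Finset.mem_Iio.mp hk
    rw [mu, if_neg hkp.ne, real_inner_comm, dd]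
  rw [← Finset.sum_filter_add_sum_filter_not Finset.univ (fun k => k < p)
    (fun k => mu b p k • gso b k), h1, h2, add_comm]
  exact gso_expand0 b p

lemma inner_b_gso (q k : Fin n) : (inner ℝ (b q) (gso b k) : ℝ) = mu b q k * dd b k := by
  conv_lhs => rw [gso_expand b q]
  rw [sum_inner]
  rw [Finset.sum_eq_single_of_mem k (Finset.mem_univ k)]
  · rw [real_inner_smul_left, real_inner_self_eq_norm_sq, dd]
  · intro l _ hlk
    rw [real_inner_smul_left, gso_orthogonal b hlk, mul_zero]

lemma gram_entry (p q : Fin n) :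
    (inner ℝ (b p) (b q) : ℝ) = ∑ k, mu b p k * mu b q k * dd b k := by
  conv_lhs => rw [gso_expand b p]
  rw [sum_inner]
  refine Finset.sum_congr rfl fun k _ => ?_
  rw [real_inner_smul_left, real_inner_comm, inner_b_gso b q k]
  ring


lemma filter_lt_eq_map (t : ℕ) (ht : t ≤ n) :
    Finset.univ.filter (fun k : Fin n => (k : ℕ) < t) = Finset.univ.map (Fin.castLEEmb ht) := by
  ext k
  simp only [Finset.mem_filter, Finset.mem_univ, true_and, Finset.mem_map,
    Fin.castLEEmb_apply]
  constructor
  · intro h; exact ⟨⟨k, h⟩, rfl⟩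
  · rintro ⟨x, rfl⟩
    simpa using x.2.trans_le ht

lemma sum_trunc {t : ℕ} (ht : t ≤ n) (F : Fin n → ℝ)
    (hF : ∀ k : Fin n, t ≤ (k : ℕ) → F k = 0) :
    ∑ k, F k = ∑ k : Fin t, F (Fin.castLE ht k) := by
  rw [← Finset.sum_filter_add_sum_filter_not Finset.univ (fun k : Fin n => (k : ℕ) < t) F]
  rw [Finset.sum_eq_zero (fun k hk => hF k (le_of_not_gt (Finset.mem_filter.mp hk).2)), add_zero]
  rw [filter_lt_eq_map t ht, Finset.sum_map]
  rfl

lemma minor_det (t : ℕ) (ht : t ≤ n) :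
    (Matrix.of fun p q : Fin t =>
      (inner ℝ (b (Fin.castLE ht p)) (b (Fin.castLE ht q)) : ℝ)).det
      = ∏ k : Fin t, dd b (Fin.castLE ht k) := by
  classical
  set M : Matrix (Fin t) (Fin t) ℝ :=
    Matrix.of fun p k => mu b (Fin.castLE ht p) (Fin.castLE ht k) with hM
  set D : Matrix (Fin t) (Fin t) ℝ := Matrix.diagonal fun k => dd b (Fin.castLE ht k) with hD
  have hfac : (Matrix.of fun p q : Fin t =>
      (inner ℝ (b (Fin.castLE ht p)) (b (Fin.castLE ht q)) : ℝ)) = M * D * M.transpose := by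
    ext p q
    have hvan : ∀ k : Fin n, t ≤ (k : ℕ) →
        mu b (Fin.castLE ht p) k * mu b (Fin.castLE ht q) k * dd b k = 0 := by
      intro k hk
      have : Fin.castLE ht p < k := by
        rw [Fin.lt_def]
        exact lt_of_lt_of_le (by simpa using p.2) hk
      rw [mu_zero b this, zero_mul, zero_mul]
    have := gram_entry b (Fin.castLE ht p) (Fin.castLE ht q)
    rw [Matrix.of_apply, this, sum_trunc ht _ hvan]
    rw [Matrix.mul_assoc]
    simp only [hM, hD, Matrix.mul_apply, Matrix.diagonal_mul, Matrix.transpose_apply,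
      Matrix.of_apply]
    refine Finset.sum_congr rfl fun k _ => ?_
    rw [Finset.sum_eq_single_of_mem k (Finset.mem_univ k)]
    · rw [Matrix.diagonal_apply_eq]; ring
    · intro x _ hxk
      rw [Matrix.diagonal_apply_ne _ (Ne.symm hxk), zero_mul]
  have hMdet : M.det = 1 := by
    rw [Matrix.det_of_lowerTriangular M ?_]
    · rw [hM]
      simp [mu_self]
    · intro p q h
      have hpq : p < q := h
      refine mu_zero b ?_
      rw [Fin.lt_def]
      simpa using hpq
  rw [hfac, Matrix.det_mul, Matrix.det_mul, Matrix.det_transpose, Matrix.det_diagonal, hMdet]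
  ring


lemma prod_dd_eq_one
    (hdet : (Matrix.of fun i j : Fin n => (inner ℝ (b i) (b j) : ℝ)).det = 1) :
    ∏ k, dd b k = 1 := by
  have h := minor_det b n le_rfl
  simp only [show ∀ k : Fin n, Fin.castLE le_rfl k = k from fun _ => rfl] at h
  rw [hdet] at h
  exact h.symm

lemma dd_pos (hdet : (Matrix.of fun i j : Fin n => (inner ℝ (b i) (b j) : ℝ)).det = 1)
    (k : Fin n) : 0 < dd b k := by
  have h := prod_dd_eq_one b hdet
  have hne : dd b k ≠ 0 := by
    intro h0
    rw [Finset.prod_eq_zero (Finset.mem_univ k) h0] at h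
    norm_num at h
  have : (0:ℝ) ≤ dd b k := by
    rw [dd]; positivity
  exact lt_of_le_of_ne this (Ne.symm hne)

lemma minor_ge_one
    (hint : ∀ i j : Fin n, ∃ z : ℤ, (inner ℝ (b i) (b j) : ℝ) = z)
    (hdet : (Matrix.of fun i j : Fin n => (inner ℝ (b i) (b j) : ℝ)).det = 1)
    (t : ℕ) (ht : t ≤ n) :
    (1:ℝ) ≤ ∏ k : Fin t, dd b (Fin.castLE ht k) := by
  classical
  choose z hz using hint
  have hmap : (Matrix.of fun p q : Fin t =>
      (inner ℝ (b (Fin.castLE ht p)) (b (Fin.castLE ht q)) : ℝ))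
      = (Matrix.of fun p q : Fin t => z (Fin.castLE ht p) (Fin.castLE ht q)).map
          (Int.cast : ℤ → ℝ) := by
    ext p q
    simp [Matrix.map, hz]
  have hd := minor_det b t ht
  rw [hmap] at hd
  rw [show (Matrix.of fun p q : Fin t => z (Fin.castLE ht p) (Fin.castLE ht q)).map
      (Int.cast : ℤ → ℝ) = (Int.castRingHom ℝ).mapMatrix
      (Matrix.of fun p q : Fin t => z (Fin.castLE ht p) (Fin.castLE ht q)) from rfl,
    ← RingHom.map_det] at hd
  have hpos : (0:ℝ) < ∏ k : Fin t, dd b (Fin.castLE ht k) :=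
    Finset.prod_pos fun k _ => dd_pos b hdet _
  rw [← hd] at hpos ⊢
  rw [show ((Int.castRingHom ℝ) (Matrix.of fun p q : Fin t =>
      z (Fin.castLE ht p) (Fin.castLE ht q)).det : ℝ)
    = (((Matrix.of fun p q : Fin t => z (Fin.castLE ht p) (Fin.castLE ht q)).det : ℤ) : ℝ)
    from rfl] at hpos ⊢
  have : (0:ℤ) < (Matrix.of fun p q : Fin t => z (Fin.castLE ht p) (Fin.castLE ht q)).det := by
    exact_mod_cast hpos
  exact_mod_cast this


/-- `dd` as a function on `ℕ`. -/
noncomputable def ddN (r : ℕ) : ℝ := if h : r < n then dd b ⟨r, h⟩ else 1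

lemma ddN_eq (k : Fin n) : dd b k = ddN b k.val := by
  rw [ddN, dif_pos k.2]

lemma ddN_pos (hdet : (Matrix.of fun i j : Fin n => (inner ℝ (b i) (b j) : ℝ)).det = 1)
    (r : ℕ) : 0 < ddN b r := by
  rw [ddN]
  split
  · exact dd_pos b hdet _
  · norm_num

lemma prod_ddN_ge_one
    (hint : ∀ i j : Fin n, ∃ z : ℤ, (inner ℝ (b i) (b j) : ℝ) = z)
    (hdet : (Matrix.of fun i j : Fin n => (inner ℝ (b i) (b j) : ℝ)).det = 1)
    (t : ℕ) (ht : t ≤ n) :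
    (1:ℝ) ≤ ∏ r ∈ Finset.range t, ddN b r := by
  have h := minor_ge_one b hint hdet t ht
  rw [show (∏ k : Fin t, dd b (Fin.castLE ht k)) = ∏ k : Fin t, ddN b (k : ℕ) from
    Finset.prod_congr rfl fun k _ => ddN_eq b _] at h
  rwa [Fin.prod_univ_eq_prod_range (fun r => ddN b r) t] at h

lemma prod_ddN_eq_one
    (hdet : (Matrix.of fun i j : Fin n => (inner ℝ (b i) (b j) : ℝ)).det = 1) :
    ∏ r ∈ Finset.range n, ddN b r = 1 := by
  have h := prod_dd_eq_one b hdet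
  rw [show (∏ k, dd b k) = ∏ k : Fin n, ddN b (k : ℕ) from
    Finset.prod_congr rfl fun k _ => ddN_eq b _] at h
  rwa [Fin.prod_univ_eq_prod_range (fun r => ddN b r) n] at h

lemma ddN_chain
    (hdet : (Matrix.of fun i j : Fin n => (inner ℝ (b i) (b j) : ℝ)).det = 1)
    (hlov : ∀ r : ℕ, r + 1 < n → ddN b r ≤ 2 * ddN b (r + 1)) :
    ∀ p q : ℕ, p ≤ q → q < n → ddN b p ≤ 2 ^ (q - p) * ddN b q := by
  intro p q hpq
  induction q, hpq using Nat.le_induction with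
  | base => intro _; simp
  | succ q hpq ih =>
    intro hq1
    have hq : q < n := Nat.lt_of_succ_lt hq1
    calc ddN b p ≤ 2 ^ (q - p) * ddN b q := ih hq
    _ ≤ 2 ^ (q - p) * (2 * ddN b (q+1)) := by
        have := hlov q hq1
        have h2 : (0:ℝ) ≤ 2 ^ (q - p) := by positivity
        nlinarith
    _ = 2 ^ (q + 1 - p) * ddN b (q+1) := by
        rw [show q + 1 - p = (q - p) + 1 by omega, pow_succ]
        ring

lemma ddN_lower
    (hint : ∀ i j : Fin n, ∃ z : ℤ, (inner ℝ (b i) (b j) : ℝ) = z)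
    (hdet : (Matrix.of fun i j : Fin n => (inner ℝ (b i) (b j) : ℝ)).det = 1)
    (hlov : ∀ r : ℕ, r + 1 < n → ddN b r ≤ 2 * ddN b (r + 1))
    (r : ℕ) (hr : r < n) :
    1 ≤ Real.sqrt (Real.sqrt 2) ^ (2 * r) * ddN b r := by
  set Q := Real.sqrt (Real.sqrt 2) with hQ
  have hQ0 : 0 < Q := by rw [hQ]; positivity
  have hQ4 : Q ^ 4 = 2 := by
    rw [hQ, show 4 = 2 * 2 by rfl, pow_mul, Real.sq_sqrt (by positivity),
      Real.sq_sqrt (by norm_num)]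
  have h1 : (1:ℝ) ≤ ∏ s ∈ Finset.range (r+1), ddN b s := prod_ddN_ge_one b hint hdet (r+1) hr
  have h2 : ∏ s ∈ Finset.range (r+1), ddN b s
      ≤ ∏ s ∈ Finset.range (r+1), ((2:ℝ) ^ (r - s) * ddN b r) := by
    refine Finset.prod_le_prod (fun s _ => (ddN_pos b hdet s).le) (fun s hs => ?_)
    have hsr := Finset.mem_range.mp hs
    exact ddN_chain b hdet hlov s r (by omega) hr
  have h3 : ∏ s ∈ Finset.range (r+1), ((2:ℝ) ^ (r - s) * ddN b r)
      = 2 ^ (∑ s ∈ Finset.range (r+1), (r - s)) * (ddN b r) ^ (r+1) := by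
    rw [Finset.prod_mul_distrib, Finset.prod_const, Finset.prod_pow_eq_pow_sum,
      Finset.card_range]
  have hsum : (∑ s ∈ Finset.range (r+1), (r - s)) = ∑ s ∈ Finset.range (r+1), s := by
    have := Finset.sum_range_reflect (fun x => x) (r+1)
    simpa using this
  have hgauss : (∑ s ∈ Finset.range (r+1), s) * 2 = (r+1) * r := by
    simpa using Finset.sum_range_id_mul_two (r+1)
  have hpow : (2:ℝ) ^ (∑ s ∈ Finset.range (r+1), (r - s)) = (Q ^ (2*r)) ^ (r+1) := by
    rw [← hQ4, ← pow_mul, ← pow_mul]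
    congr 1
    rw [hsum]
    calc 4 * (∑ s ∈ Finset.range (r+1), s) = 2 * ((∑ s ∈ Finset.range (r+1), s) * 2) := by ring
    _ = 2 * ((r+1) * r) := by rw [hgauss]
    _ = 2 * r * (r + 1) := by ring
  have h4 : (1:ℝ) ≤ (Q ^ (2*r) * ddN b r) ^ (r+1) := by
    rw [mul_pow, ← hpow]
    calc (1:ℝ) ≤ ∏ s ∈ Finset.range (r+1), ddN b s := h1
    _ ≤ _ := le_of_le_of_eq h2 h3
  have hnn : 0 ≤ Q ^ (2*r) * ddN b r :=
    mul_nonneg (by positivity) (ddN_pos b hdet r).le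
  exact (one_le_pow_iff_of_nonneg hnn (Nat.succ_ne_zero r)).mp h4

lemma ddN_upper
    (hint : ∀ i j : Fin n, ∃ z : ℤ, (inner ℝ (b i) (b j) : ℝ) = z)
    (hdet : (Matrix.of fun i j : Fin n => (inner ℝ (b i) (b j) : ℝ)).det = 1)
    (hlov : ∀ r : ℕ, r + 1 < n → ddN b r ≤ 2 * ddN b (r + 1))
    (r : ℕ) (hr : r < n) :
    ddN b r ≤ Real.sqrt (Real.sqrt 2) ^ (2 * (n - 1 - r)) := by
  set Q := Real.sqrt (Real.sqrt 2) with hQ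
  have hQ0 : 0 < Q := by rw [hQ]; positivity
  have hQ4 : Q ^ 4 = 2 := by
    rw [hQ, show 4 = 2 * 2 by rfl, pow_mul, Real.sq_sqrt (by positivity),
      Real.sq_sqrt (by norm_num)]
  set c := n - r with hc
  have hc1 : 1 ≤ c := by omega
  -- the tail product is at most 1
  have htail : ∏ s ∈ Finset.Ico r n, ddN b s ≤ 1 := by
    have hsplit := Finset.prod_range_mul_prod_Ico (fun s => ddN b s) (le_of_lt hr)
    have h1 : (1:ℝ) ≤ ∏ s ∈ Finset.range r, ddN b s := prod_ddN_ge_one b hint hdet r hr.le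
    have h2 : ∏ s ∈ Finset.range n, ddN b s = 1 := prod_ddN_eq_one b hdet
    have hpos : (0:ℝ) < ∏ s ∈ Finset.Ico r n, ddN b s :=
      Finset.prod_pos fun s _ => ddN_pos b hdet s
    nlinarith [hsplit, h1, h2, hpos]
  have hterm : ∀ s ∈ Finset.Ico r n, ddN b r ≤ 2 ^ (s - r) * ddN b s := by
    intro s hs
    rw [Finset.mem_Ico] at hs
    exact ddN_chain b hdet hlov r s hs.1 hs.2
  have hmain : (ddN b r) ^ c ≤ 2 ^ (∑ s ∈ Finset.Ico r n, (s - r)) := by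
    calc (ddN b r) ^ c = ∏ s ∈ Finset.Ico r n, ddN b r := by
          rw [Finset.prod_const, Nat.card_Ico]
    _ ≤ ∏ s ∈ Finset.Ico r n, ((2:ℝ) ^ (s - r) * ddN b s) :=
          Finset.prod_le_prod (fun s _ => (ddN_pos b hdet r).le) hterm
    _ = 2 ^ (∑ s ∈ Finset.Ico r n, (s - r)) * ∏ s ∈ Finset.Ico r n, ddN b s := by
          rw [Finset.prod_mul_distrib, Finset.prod_pow_eq_pow_sum]
    _ ≤ 2 ^ (∑ s ∈ Finset.Ico r n, (s - r)) * 1 := by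
          have : (0:ℝ) ≤ 2 ^ (∑ s ∈ Finset.Ico r n, (s - r)) := by positivity
          nlinarith [htail]
    _ = _ := mul_one _
  have hsum : (∑ s ∈ Finset.Ico r n, (s - r)) = ∑ u ∈ Finset.range c, u := by
    rw [Finset.sum_Ico_eq_sum_range]
    exact Finset.sum_congr rfl fun u _ => by omega
  have hgauss : (∑ u ∈ Finset.range c, u) * 2 = c * (c - 1) := by
    simpa using Finset.sum_range_id_mul_two c
  have hpow : (2:ℝ) ^ (∑ s ∈ Finset.Ico r n, (s - r)) = (Q ^ (2 * (n - 1 - r))) ^ c := by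
    rw [← hQ4, ← pow_mul, ← pow_mul]
    congr 1
    rw [hsum, show 2 * (n - 1 - r) = 2 * (c - 1) by omega]
    calc 4 * (∑ u ∈ Finset.range c, u) = 2 * ((∑ u ∈ Finset.range c, u) * 2) := by ring
    _ = 2 * (c * (c - 1)) := by rw [hgauss]
    _ = 2 * (c - 1) * c := by ring
  rw [hpow] at hmain
  have := (pow_le_pow_iff_left₀ ((ddN_pos b hdet r).le)
    (by positivity : (0:ℝ) ≤ Q ^ (2 * (n - 1 - r))) (by omega : c ≠ 0)).mp hmain
  exact this


lemma geo_sum (N : ℕ) : ∑ s ∈ Finset.range N, (2:ℝ) ^ (N - s) = 2 ^ (N + 1) - 2 := by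
  induction N with
  | zero => simp
  | succ N ih =>
    rw [Finset.sum_range_succ]
    have h1 : ∑ s ∈ Finset.range N, (2:ℝ) ^ (N + 1 - s)
        = ∑ s ∈ Finset.range N, 2 * (2:ℝ) ^ (N - s) := by
      refine Finset.sum_congr rfl fun s hs => ?_
      have := Finset.mem_range.mp hs
      rw [show N + 1 - s = (N - s) + 1 by omega, pow_succ]
      ring
    rw [h1, ← Finset.mul_sum, ih]
    simp
    ring

lemma binorm_le
    (hdet : (Matrix.of fun i j : Fin n => (inner ℝ (b i) (b j) : ℝ)).det = 1)
    (hlov : ∀ r : ℕ, r + 1 < n → ddN b r ≤ 2 * ddN b (r + 1))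
    (hμ : ∀ p k : Fin n, k < p → |mu b p k| ≤ 1 / 2)
    (p : Fin n) :
    (inner ℝ (b p) (b p) : ℝ) ≤ 2 ^ (p : ℕ) * ddN b (p : ℕ) := by
  rw [gram_entry b p p]
  rw [← Finset.sum_filter_add_sum_filter_not Finset.univ (fun k : Fin n => (k:ℕ) < (p:ℕ))
    (fun k => mu b p k * mu b p k * dd b k)]
  have h2 : ∑ k ∈ Finset.univ.filter (fun k : Fin n => ¬ (k:ℕ) < (p:ℕ)),
      mu b p k * mu b p k * dd b k = ddN b (p:ℕ) := by
    rw [Finset.sum_eq_single_of_mem p (by simp)]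
    · rw [mu_self, ddN_eq]; ring
    · intro k hk hne
      have : p < k := by
        have := (Finset.mem_filter.mp hk).2
        rw [Fin.lt_def]
        rcases Nat.lt_or_ge (p:ℕ) (k:ℕ) with h | h
        · exact h
        · exfalso; exact hne (Fin.ext (by omega))
      rw [mu_zero b this]; ring
  have h1 : ∑ k ∈ Finset.univ.filter (fun k : Fin n => (k:ℕ) < (p:ℕ)),
      mu b p k * mu b p k * dd b k
      ≤ ∑ k ∈ Finset.univ.filter (fun k : Fin n => (k:ℕ) < (p:ℕ)),
        (1/4) * (2:ℝ) ^ ((p:ℕ) - (k:ℕ)) * ddN b (p:ℕ) := by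
    refine Finset.sum_le_sum fun k hk => ?_
    have hkp : (k:ℕ) < (p:ℕ) := (Finset.mem_filter.mp hk).2
    have habs : |mu b p k| ≤ 1/2 := hμ p k (by rwa [Fin.lt_def])
    have hsq : mu b p k * mu b p k ≤ 1/4 := by
      have := abs_nonneg (mu b p k)
      nlinarith [sq_abs (mu b p k)]
    have hchain : ddN b (k:ℕ) ≤ 2 ^ ((p:ℕ) - (k:ℕ)) * ddN b (p:ℕ) :=
      ddN_chain b hdet hlov (k:ℕ) (p:ℕ) hkp.le p.2
    have hddk : (0:ℝ) < ddN b (k:ℕ) := ddN_pos b hdet _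
    have hddp : (0:ℝ) < ddN b (p:ℕ) := ddN_pos b hdet _
    have hmm : (0:ℝ) ≤ mu b p k * mu b p k := mul_self_nonneg _
    rw [ddN_eq]
    nlinarith [pow_pos (show (0:ℝ) < 2 by norm_num) ((p:ℕ) - (k:ℕ))]
  have hpull : ∑ k ∈ Finset.univ.filter (fun k : Fin n => (k:ℕ) < (p:ℕ)),
      (1/4) * (2:ℝ) ^ ((p:ℕ) - (k:ℕ)) * ddN b (p:ℕ)
      = (∑ k ∈ Finset.univ.filter (fun k : Fin n => (k:ℕ) < (p:ℕ)),
          (2:ℝ) ^ ((p:ℕ) - (k:ℕ))) * ((1/4) * ddN b (p:ℕ)) := by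
    rw [Finset.sum_mul]
    exact Finset.sum_congr rfl fun k _ => by ring
  have hsum : (∑ k ∈ Finset.univ.filter (fun k : Fin n => (k:ℕ) < (p:ℕ)),
      (2:ℝ) ^ ((p:ℕ) - (k:ℕ))) = 2 ^ ((p:ℕ) + 1) - 2 := by
    rw [filter_lt_eq_map (p:ℕ) p.2.le, Finset.sum_map]
    simp only [Fin.castLEEmb_apply, Fin.coe_castLE]
    rw [Fin.sum_univ_eq_sum_range (fun s => (2:ℝ) ^ ((p:ℕ) - s)) (p:ℕ), geo_sum]
  rw [hpull, hsum] at h1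
  have hddp : (0:ℝ) < ddN b (p:ℕ) := ddN_pos b hdet _
  have h2pow : (1:ℝ) ≤ 2 ^ (p:ℕ) := by
    rw [show (1:ℝ) = 1 ^ (p:ℕ) from (one_pow _).symm]
    exact pow_le_pow_left₀ (by norm_num) (by norm_num) _
  have hp1 : (2:ℝ) ^ ((p:ℕ) + 1) = 2 * 2 ^ (p:ℕ) := by rw [pow_succ]; ring
  rw [h2]
  have hXD : ddN b (p:ℕ) ≤ 2 ^ (p:ℕ) * ddN b (p:ℕ) := by
    have := mul_le_mul_of_nonneg_right h2pow hddp.le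
    rwa [one_mul] at this
  have h3 : ((2:ℝ) ^ ((p:ℕ)+1) - 2) * (1/4 * ddN b (p:ℕ))
      = (2 ^ (p:ℕ) * ddN b (p:ℕ))/2 - ddN b (p:ℕ)/2 := by
    rw [hp1]; ring
  rw [h3] at h1
  linarith [h1, hXD]

end main


set_option maxHeartbeats 1000000 in
/-- The matrix of a lattice automorphism with respect to an LLL-reduced basis
of an integral unimodular lattice has entries bounded by `3^(n-1)`. -/
theorem stmt_4 (n : ℕ) (b : Fin n → EuclideanSpace ℝ (Fin n))
    (hint : ∀ i j : Fin n, ∃ z : ℤ, (inner ℝ (b i) (b j) : ℝ) = z)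
    (hdet : (Matrix.of fun i j : Fin n => (inner ℝ (b i) (b j) : ℝ)).det = 1)
    (hsize : ∀ i j : Fin n, j < i →
      |(inner ℝ (b i) (gso b j) : ℝ) / ‖gso b j‖ ^ 2| ≤ 1 / 2)
    (hlovasz : ∀ i : Fin n, ∀ h : (i : ℕ) + 1 < n,
      ‖gso b i‖ ^ 2 ≤ 2 * ‖gso b ⟨(i : ℕ) + 1, h⟩‖ ^ 2)
    -- `a` is the integer matrix of an automorphism `σ` of the lattice,
    -- i.e. `σ(b_i) = ∑_j a_ij b_j`, `σ` preserves the inner ℝ product, and `a`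
    -- is invertible over `ℤ`:
    (a : Matrix (Fin n) (Fin n) ℤ)
    (hpres : ∀ i j : Fin n,
      (inner ℝ (∑ k, (a i k : ℝ) • b k) (∑ k, (a j k : ℝ) • b k) : ℝ) =
        (inner ℝ (b i) (b j) : ℝ))
    (hunit : IsUnit a.det) :
    ∀ i j : Fin n, |a i j| ≤ 3 ^ (n - 1) := by
  intro i j
  have hn : 0 < n := i.pos
  set m : ℕ := n - 1 with hm
  set Q : ℝ := Real.sqrt (Real.sqrt 2) with hQ
  have hQ0 : 0 < Q := by rw [hQ]; positivity
  have hQ4 : Q ^ 4 = 2 := by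
    rw [hQ, show 4 = 2 * 2 by rfl, pow_mul, Real.sq_sqrt (by positivity),
      Real.sq_sqrt (by norm_num)]
  have hQ1 : 1 ≤ Q := by
    have h2 : (1:ℝ) ≤ Real.sqrt 2 := by
      rw [show (1:ℝ) = Real.sqrt 1 from Real.sqrt_one.symm]
      exact Real.sqrt_le_sqrt (by norm_num)
    rw [hQ, show (1:ℝ) = Real.sqrt 1 from Real.sqrt_one.symm]
    exact Real.sqrt_le_sqrt (by linarith)
  have hQ3 : Q ^ 3 ≤ 2 := by
    have h34 : (Q ^ 3) ^ 4 = 8 := by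
      rw [← pow_mul, show 3 * 4 = 4 * 3 by rfl, pow_mul, hQ4]; norm_num
    refine (pow_le_pow_iff_left₀ (by positivity) (by norm_num) (by norm_num : (4:ℕ) ≠ 0)).mp ?_
    rw [h34]; norm_num
  -- translate hypotheses
  have hlov : ∀ r : ℕ, r + 1 < n → ddN b r ≤ 2 * ddN b (r + 1) := by
    intro r hr1
    have hr : r < n := by omega
    rw [ddN, dif_pos hr, ddN, dif_pos hr1]
    exact hlovasz ⟨r, hr⟩ hr1
  have hμ : ∀ p k : Fin n, k < p → |mu b p k| ≤ 1 / 2 := by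
    intro p k h
    rw [mu, if_neg h.ne]
    exact hsize p k h
  -- the transformed vector
  set v : EuclideanSpace ℝ (Fin n) := ∑ k, (a i k : ℝ) • b k with hv
  have hvv : (inner ℝ v v : ℝ) = (inner ℝ (b i) (b i) : ℝ) := hpres i i
  -- uniform bound on the Gram-Schmidt coefficients of v
  have hT : ∀ k : Fin n, |(inner ℝ v (gso b k) : ℝ) / dd b k| ≤ Q ^ (3 * m) := by
    intro k
    have hddk : 0 < dd b k := dd_pos b hdet k
    have hcs : |(inner ℝ v (gso b k) : ℝ)| ≤ ‖v‖ * ‖gso b k‖ := abs_real_inner_le_norm _ _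
    have hsq : ((inner ℝ v (gso b k) : ℝ) / dd b k) ^ 2 ≤ (inner ℝ (b i) (b i) : ℝ) / dd b k := by
      have hnv : ‖v‖ ^ 2 = (inner ℝ (b i) (b i) : ℝ) := by
        rw [← hvv]; exact (real_inner_self_eq_norm_sq v).symm
      have hng : ‖gso b k‖ ^ 2 = dd b k := rfl
      have h1 : (inner ℝ v (gso b k) : ℝ) ^ 2 ≤ ‖v‖ ^ 2 * ‖gso b k‖ ^ 2 := by
        rw [← sq_abs]
        calc |(inner ℝ v (gso b k) : ℝ)| ^ 2 ≤ (‖v‖ * ‖gso b k‖) ^ 2 := by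
              have := abs_nonneg (inner ℝ v (gso b k) : ℝ)
              nlinarith
        _ = ‖v‖ ^ 2 * ‖gso b k‖ ^ 2 := by ring
      rw [hnv, hng] at h1
      rw [div_pow, div_le_div_iff₀ (by positivity) hddk]
      nlinarith [mul_le_mul_of_nonneg_right h1 hddk.le, hddk]
    -- bound inner ℝ (b i) (b i) / dd b k by Q ^ (6m)
    have hbi : (inner ℝ (b i) (b i) : ℝ) ≤ Q ^ (4 * (i:ℕ)) * Q ^ (2 * (m - (i:ℕ))) := by
      calc (inner ℝ (b i) (b i) : ℝ) ≤ 2 ^ (i:ℕ) * ddN b (i:ℕ) := binorm_le b hdet hlov hμ i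
      _ ≤ 2 ^ (i:ℕ) * Q ^ (2 * (n - 1 - (i:ℕ))) := by
          have := ddN_upper b hint hdet hlov (i:ℕ) i.2
          have h2 : (0:ℝ) < 2 ^ (i:ℕ) := by positivity
          nlinarith
      _ = Q ^ (4 * (i:ℕ)) * Q ^ (2 * (m - (i:ℕ))) := by
          rw [← hQ4, ← pow_mul, hm]
    have hinv : 1 / dd b k ≤ Q ^ (2 * (k:ℕ)) := by
      have hl := ddN_lower b hint hdet hlov (k:ℕ) k.2
      rw [ddN_eq b k] at hddk ⊢
      rw [div_le_iff₀ hddk]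
      calc (1:ℝ) ≤ Q ^ (2 * (k:ℕ)) * ddN b (k:ℕ) := hl
      _ = _ := by ring
    have hfin : (inner ℝ (b i) (b i) : ℝ) / dd b k ≤ Q ^ (6 * m) := by
      have hbi0 : (0:ℝ) ≤ (inner ℝ (b i) (b i) : ℝ) := real_inner_self_nonneg
      calc (inner ℝ (b i) (b i) : ℝ) / dd b k
          = (inner ℝ (b i) (b i) : ℝ) * (1 / dd b k) := by ring
      _ ≤ (Q ^ (4 * (i:ℕ)) * Q ^ (2 * (m - (i:ℕ)))) * Q ^ (2 * (k:ℕ)) := by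
          have h1 : (0:ℝ) ≤ 1 / dd b k := by positivity
          have h2 : (0:ℝ) < Q ^ (4 * (i:ℕ)) * Q ^ (2 * (m - (i:ℕ))) := by positivity
          nlinarith
      _ = Q ^ (4 * (i:ℕ) + 2 * (m - (i:ℕ)) + 2 * (k:ℕ)) := by
          rw [← pow_add, ← pow_add]
      _ ≤ Q ^ (6 * m) := by
          refine pow_le_pow_right₀ hQ1 ?_
          have hi : (i:ℕ) ≤ m := by omega
          have hk : (k:ℕ) ≤ m := by omega
          omega
    have habs : |(inner ℝ v (gso b k) : ℝ) / dd b k| ^ 2 ≤ (Q ^ (3 * m)) ^ 2 := by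
      rw [sq_abs]
      calc ((inner ℝ v (gso b k) : ℝ) / dd b k) ^ 2 ≤ (inner ℝ (b i) (b i) : ℝ) / dd b k := hsq
      _ ≤ Q ^ (6 * m) := hfin
      _ = (Q ^ (3 * m)) ^ 2 := by rw [← pow_mul]; ring_nf
    have h1 := abs_nonneg ((inner ℝ v (gso b k) : ℝ) / dd b k)
    have h2 : (0:ℝ) < Q ^ (3 * m) := by positivity
    nlinarith
  -- the recursion for the coefficients
  have hdd_ne : ∀ k : Fin n, dd b k ≠ 0 := fun k => (dd_pos b hdet k).ne'
  have hTsum : ∀ k : Fin n, (inner ℝ v (gso b k) : ℝ) / dd b k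
      = ∑ l, (a i l : ℝ) * mu b l k := by
    intro k
    have hvk : (inner ℝ v (gso b k) : ℝ) = ∑ l, (a i l : ℝ) * (mu b l k * dd b k) := by
      rw [hv, sum_inner]
      refine Finset.sum_congr rfl fun l _ => ?_
      rw [real_inner_smul_left, inner_b_gso]
    rw [hvk, Finset.sum_div]
    refine Finset.sum_congr rfl fun l _ => ?_
    rw [mul_div_assoc, mul_div_cancel_right₀ _ (hdd_ne k)]
  have hsplitk : ∀ k : Fin n, (∑ l, (a i l : ℝ) * mu b l k)
      = (a i k : ℝ) + ∑ l ∈ Finset.univ.filter (fun l : Fin n => (k:ℕ) < (l:ℕ)),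
          (a i l : ℝ) * mu b l k := by
    intro k
    rw [← Finset.sum_filter_add_sum_filter_not Finset.univ (fun l : Fin n => (k:ℕ) < (l:ℕ))
      (fun l => (a i l : ℝ) * mu b l k)]
    have h2 : ∑ l ∈ Finset.univ.filter (fun l : Fin n => ¬ (k:ℕ) < (l:ℕ)),
        (a i l : ℝ) * mu b l k = (a i k : ℝ) := by
      rw [Finset.sum_eq_single_of_mem k (by simp)]
      · rw [mu_self, mul_one]
      · intro l hl hne
        have hlk : l < k := by
          have := (Finset.mem_filter.mp hl).2
          rw [Fin.lt_def]
          rcases Nat.lt_or_ge (l:ℕ) (k:ℕ) with h | h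
          · exact h
          · exact absurd (Fin.ext (by omega)) hne
        rw [mu_zero b hlk, mul_zero]
    rw [h2, add_comm]
  -- the tail sums of absolute values
  set W : ℕ → ℝ :=
    fun t => ∑ l ∈ Finset.univ.filter (fun l : Fin n => t ≤ (l:ℕ)), |(a i l : ℝ)| with hW
  have hWn : W n = 0 := by
    rw [hW]
    have : Finset.univ.filter (fun l : Fin n => n ≤ (l:ℕ)) = ∅ := by
      refine Finset.filter_eq_empty_iff.mpr fun l _ => ?_
      omega
    simp [this]
  have hWstep : ∀ k : Fin n, W (k:ℕ) = |(a i k : ℝ)| + W ((k:ℕ) + 1) := by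
    intro k
    have hins : Finset.univ.filter (fun l : Fin n => (k:ℕ) ≤ (l:ℕ))
        = insert k (Finset.univ.filter (fun l : Fin n => (k:ℕ) + 1 ≤ (l:ℕ))) := by
      ext l
      simp only [Finset.mem_filter, Finset.mem_univ, true_and, Finset.mem_insert]
      constructor
      · intro h
        rcases Nat.eq_or_lt_of_le h with h1 | h1
        · exact Or.inl (Fin.ext h1.symm)
        · exact Or.inr h1
      · rintro (rfl | h) <;> omega
    have hnotmem : k ∉ Finset.univ.filter (fun l : Fin n => (k:ℕ) + 1 ≤ (l:ℕ)) := by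
      simp
    rw [hW]
    simp only []
    rw [hins, Finset.sum_insert hnotmem]
  have habs : ∀ k : Fin n, |(a i k : ℝ)| ≤ Q ^ (3*m) + (1/2) * W ((k:ℕ) + 1) := by
    intro k
    have heq : (a i k : ℝ) = (inner ℝ v (gso b k) : ℝ) / dd b k
        - ∑ l ∈ Finset.univ.filter (fun l : Fin n => (k:ℕ) < (l:ℕ)),
            (a i l : ℝ) * mu b l k := by
      rw [hTsum k, hsplitk k]; ring
    have hs : |∑ l ∈ Finset.univ.filter (fun l : Fin n => (k:ℕ) < (l:ℕ)),
        (a i l : ℝ) * mu b l k| ≤ (1/2) * W ((k:ℕ) + 1) := by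
      calc |∑ l ∈ Finset.univ.filter (fun l : Fin n => (k:ℕ) < (l:ℕ)),
          (a i l : ℝ) * mu b l k|
          ≤ ∑ l ∈ Finset.univ.filter (fun l : Fin n => (k:ℕ) < (l:ℕ)),
            |(a i l : ℝ) * mu b l k| := Finset.abs_sum_le_sum_abs _ _
      _ ≤ ∑ l ∈ Finset.univ.filter (fun l : Fin n => (k:ℕ) < (l:ℕ)),
            (1/2) * |(a i l : ℝ)| := by
          refine Finset.sum_le_sum fun l hl => ?_
          have hkl : k < l := by
            rw [Fin.lt_def]; exact (Finset.mem_filter.mp hl).2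
          have := hμ l k hkl
          rw [abs_mul]
          have h0 := abs_nonneg ((a i l : ℝ))
          nlinarith
      _ = (1/2) * W ((k:ℕ) + 1) := by
          rw [hW]
          simp only []
          rw [Finset.mul_sum]
          refine Finset.sum_congr ?_ fun l _ => rfl
          ext l
          simp only [Finset.mem_filter, Finset.mem_univ, true_and]
          omega
    have := abs_sub ((inner ℝ v (gso b k) : ℝ) / dd b k)
      (∑ l ∈ Finset.univ.filter (fun l : Fin n => (k:ℕ) < (l:ℕ)), (a i l : ℝ) * mu b l k)
    rw [← heq] at this
    have hTk := hT k
    linarith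
  have hWb : ∀ t : ℕ, t ≤ n → W (n - t) ≤ (2 * (3/2:ℝ)^t - 2) * Q ^ (3*m) := by
    intro t
    induction t with
    | zero =>
      intro _
      rw [Nat.sub_zero, hWn]
      norm_num
    | succ t ih =>
      intro ht1
      have ht : t ≤ n := by omega
      have hk0lt : n - t - 1 < n := by omega
      set k0 : Fin n := ⟨n - t - 1, hk0lt⟩ with hk0
      have e1 : n - (t+1) = (k0:ℕ) := by
        show n - (t+1) = n - t - 1; omega
      have e2 : (k0:ℕ) + 1 = n - t := by
        show n - t - 1 + 1 = n - t; omega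
      have hstep := hWstep k0
      rw [e2] at hstep
      have hb1 := habs k0
      rw [e2] at hb1
      have hWnt := ih ht
      have hQP : (0:ℝ) < Q ^ (3*m) := pow_pos hQ0 _
      rw [e1, hstep]
      have hps : (3/2:ℝ)^(t+1) = (3/2:ℝ)^t * (3/2) := pow_succ _ _
      calc |(a i k0 : ℝ)| + W (n - t)
          ≤ (Q^(3*m) + (1/2) * W (n - t)) + W (n - t) := by linarith
      _ = Q^(3*m) + (3/2) * W (n - t) := by ring
      _ ≤ Q^(3*m) + (3/2) * ((2 * (3/2:ℝ)^t - 2) * Q^(3*m)) := by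
          linarith [mul_le_mul_of_nonneg_left hWnt (by norm_num : (0:ℝ) ≤ 3/2)]
      _ = (2 * (3/2:ℝ)^(t+1) - 2) * Q^(3*m) := by rw [hps]; ring
  -- conclusion
  have hjm : (j:ℕ) ≤ m := by omega
  have htj : n - 1 - (j:ℕ) ≤ n := by omega
  have hWj := hWb (n - 1 - (j:ℕ)) htj
  rw [show n - (n - 1 - (j:ℕ)) = (j:ℕ) + 1 by omega] at hWj
  have h1 := habs j
  have h2 : |(a i j : ℝ)| ≤ (3/2:ℝ)^(n - 1 - (j:ℕ)) * Q ^ (3*m) := by linarith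
  have h3 : (3/2:ℝ)^(n - 1 - (j:ℕ)) * Q ^ (3*m) ≤ (3/2:ℝ)^m * Q ^ (3*m) := by
    have hpp := pow_le_pow_right₀ (by norm_num : (1:ℝ) ≤ 3/2)
      (show n - 1 - (j:ℕ) ≤ m by omega)
    have hQP : (0:ℝ) < Q ^ (3*m) := pow_pos hQ0 _
    exact mul_le_mul_of_nonneg_right hpp hQP.le
  have h4 : (3/2:ℝ)^m * Q ^ (3*m) = ((3/2:ℝ) * Q^3)^m := by
    rw [mul_pow, ← pow_mul]
  have h5 : (3/2:ℝ) * Q^3 ≤ 3 := by nlinarith [hQ3]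
  have h6 : ((3/2:ℝ) * Q^3)^m ≤ 3^m := by
    have hnn : (0:ℝ) ≤ (3/2:ℝ) * Q^3 := by positivity
    exact pow_le_pow_left₀ hnn h5 m
  have hfinal : |(a i j : ℝ)| ≤ (3:ℝ)^m := by
    rw [h4] at h3
    linarith
  have hcast : |((a i j : ℤ) : ℝ)| ≤ (((3:ℤ)^m : ℤ) : ℝ) := by
    push_cast
    exact hfinal
  rw [← Int.cast_abs] at hcast
  exact_mod_cast hcast
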